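/- Let f : M_{d_L×d_0}(ℝ) → ℝ be differentiable and (Ŵ_1,...,Ŵ_L) a local minimizer of F(W_1,...,W_L) = f(W_L ··· W_1). If the product Ŵ_{L-1,-} = Ŵ_{L-1} ··· Ŵ_1 has trivial kernel, then ∇f(Ŵ_L ··· Ŵ_1) = 0. -/

import Mathlib

open Matrix

/-- Frobenius norm of a real matrix. -/
noncomputable def frob {m n : ℕ} (A : Matrix (Fin m) (Fin n) ℝ) : ℝ :=
  Real.sqrt (∑ i, ∑ j, (A i j)^2)

/-- `prodUpTo d k W = W (k-1) * ⋯ * W 1 * W 0`, the product of the first `k` layer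
matrices: in the paper's 1-indexed notation this is the truncated product
`W_{k,-} = W_k ⋯ W_1`, and `prodUpTo d L W = W_L ⋯ W_1` is the full network product. -/
noncomputable def prodUpTo (d : ℕ → ℕ) : (k : ℕ) →
    ((j : ℕ) → Matrix (Fin (d (j+1))) (Fin (d j)) ℝ) → Matrix (Fin (d k)) (Fin (d 0)) ℝ
  | 0, _ => 1
  | k+1, W => W k * prodUpTo d k W

/-- `G` is the gradient of `f` at `A`:  `f (A+H) = f A + ⟨G, H⟩_fro + o(‖H‖_fro)`,
where `⟨G, H⟩_fro = Tr (Gᵀ H)` is the Frobenius inner product. -/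
def HasGradAt {m n : ℕ} (f : Matrix (Fin m) (Fin n) ℝ → ℝ)
    (A G : Matrix (Fin m) (Fin n) ℝ) : Prop :=
  ∀ ε > (0:ℝ), ∃ δ > (0:ℝ), ∀ H : Matrix (Fin m) (Fin n) ℝ,
    frob H ≤ δ → |f (A + H) - f A - (Gᵀ * H).trace| ≤ ε * frob H

lemma frob_nonneg {m n : ℕ} (A : Matrix (Fin m) (Fin n) ℝ) : 0 ≤ frob A :=
  Real.sqrt_nonneg _

lemma frob_zero {m n : ℕ} : frob (0 : Matrix (Fin m) (Fin n) ℝ) = 0 := by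
  simp [frob]

lemma frob_smul {m n : ℕ} (t : ℝ) (A : Matrix (Fin m) (Fin n) ℝ) :
    frob (t • A) = |t| * frob A := by
  have h : ∑ i, ∑ j, ((t • A) i j)^2 = t^2 * ∑ i, ∑ j, (A i j)^2 := by
    simp [Finset.mul_sum, mul_pow]
  rw [frob, h, Real.sqrt_mul (sq_nonneg t), Real.sqrt_sq_eq_abs]; rfl

lemma sum_sq_nonneg {m n : ℕ} (A : Matrix (Fin m) (Fin n) ℝ) :
    0 ≤ ∑ i, ∑ j, (A i j)^2 :=
  Finset.sum_nonneg fun i _ => Finset.sum_nonneg fun j _ => sq_nonneg _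

lemma eq_zero_of_sum_sq_eq_zero {m n : ℕ} {A : Matrix (Fin m) (Fin n) ℝ}
    (h : ∑ i, ∑ j, (A i j)^2 = 0) : A = 0 := by
  ext i j
  have h1 := (Finset.sum_eq_zero_iff_of_nonneg
    (fun i _ => Finset.sum_nonneg fun j _ => sq_nonneg (A i j))).mp h i (Finset.mem_univ i)
  have h2 := (Finset.sum_eq_zero_iff_of_nonneg
    (fun j _ => sq_nonneg (A i j))).mp h1 j (Finset.mem_univ j)
  simpa using pow_eq_zero_iff (n := 2) (by norm_num) |>.mp h2

lemma frob_pos {m n : ℕ} {A : Matrix (Fin m) (Fin n) ℝ} (hA : A ≠ 0) : 0 < frob A := by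
  rcases (frob_nonneg A).lt_or_eq with h | h
  · exact h
  · exact absurd (eq_zero_of_sum_sq_eq_zero
      ((Real.sqrt_eq_zero (sum_sq_nonneg A)).mp h.symm)) hA

lemma prodUpTo_congr (d : ℕ → ℕ) (k : ℕ)
    (W W' : (j : ℕ) → Matrix (Fin (d (j+1))) (Fin (d j)) ℝ)
    (h : ∀ j < k, W j = W' j) : prodUpTo d k W = prodUpTo d k W' := by
  induction k with
  | zero => rfl
  | succ k ih =>
    simp only [prodUpTo, h k (Nat.lt_succ_self k),
      ih (fun j hj => h j (hj.trans (Nat.lt_succ_self k)))]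

/-- If `f` is differentiable, `(Ŵ_1,...,Ŵ_L)` is a local minimizer of
`F = f(W_L ... W_1)`, and the product `Ŵ_{L-1,-} = Ŵ_{L-1} ... Ŵ_1` has trivial kernel,
then `∇f(Ŵ_L ... Ŵ_1) = 0`. -/
theorem stmt15 (L : ℕ) (hL : 1 ≤ L) (d : ℕ → ℕ)
    (f : Matrix (Fin (d L)) (Fin (d 0)) ℝ → ℝ)
    (hdiff : ∀ A, ∃ G', HasGradAt f A G')
    (G : Matrix (Fin (d L)) (Fin (d 0)) ℝ)
    (What : (j : ℕ) → Matrix (Fin (d (j+1))) (Fin (d j)) ℝ)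
    (hf : HasGradAt f (prodUpTo d L What) G)
    (hmin : ∃ ε > (0:ℝ), ∀ W, (∀ j < L, frob (W j - What j) ≤ ε) →
      f (prodUpTo d L W) ≥ f (prodUpTo d L What))
    (hker : LinearMap.ker (Matrix.mulVecLin (prodUpTo d (L-1) What)) = ⊥) :
    G = 0 := by
  obtain ⟨K, rfl⟩ : ∃ K, L = K + 1 := ⟨L - 1, (Nat.succ_pred_eq_of_pos hL).symm⟩
  set P := prodUpTo d K What with hP
  set A := prodUpTo d (K + 1) What with hA
  -- Step 1: the directional derivative in the last layer vanishes.
  have key : ∀ V : Matrix (Fin (d (K+1))) (Fin (d K)) ℝ, (Gᵀ * (V * P)).trace = 0 := by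
    intro V
    by_contra hc
    set c : ℝ := (Gᵀ * (V * P)).trace with hcdef
    have hVP : V * P ≠ 0 := by
      intro h
      apply hc
      simp [hcdef, h]
    have hV : V ≠ 0 := by
      intro h; apply hVP; simp [h]
    have hfVP : 0 < frob (V * P) := frob_pos hVP
    have hfV : 0 < frob V := frob_pos hV
    obtain ⟨ε, hε, hminε⟩ := hmin
    obtain ⟨δ, hδ, hgrad⟩ := hf (|c| / (2 * frob (V * P)))
      (by positivity)
    -- choose step size
    set s : ℝ := min (ε / frob V) (δ / frob (V * P)) with hs
    have hspos : 0 < s := lt_min (by positivity) (by positivity)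
    set t : ℝ := if 0 < c then -s else s with ht
    have habs_t : |t| = s := by
      rw [ht]; split <;> simp [abs_of_pos hspos, abs_of_neg (neg_neg_iff_pos.mpr hspos)]
    have htc : t * c = -(s * |c|) := by
      rw [ht]
      rcases lt_trichotomy 0 c with h | h | h
      · rw [if_pos h, abs_of_pos h]; ring
      · exact absurd h.symm hc
      · rw [if_neg (not_lt.mpr h.le), abs_of_neg h]; ring
    -- the perturbed weights
    set W : (j : ℕ) → Matrix (Fin (d (j+1))) (Fin (d j)) ℝ :=
      Function.update What K (What K + t • V) with hW
    have hWK : W K = What K + t • V := Function.update_self _ _ _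
    have hWj : ∀ j, j ≠ K → W j = What j := fun j hj => Function.update_of_ne hj _ _
    have hprodK : prodUpTo d K W = P :=
      prodUpTo_congr d K W What (fun j hj => hWj j (Nat.ne_of_lt hj))
    have hprod : prodUpTo d (K+1) W = A + t • (V * P) := by
      show W K * prodUpTo d K W = A + t • (V * P)
      rw [hprodK, hWK, Matrix.add_mul, Matrix.smul_mul]
      rfl
    -- local minimality applies
    have hnear : ∀ j < K + 1, frob (W j - What j) ≤ ε := by
      intro j hj
      rcases eq_or_ne j K with rfl | hne
      · rw [hWK, add_sub_cancel_left, frob_smul, habs_t]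
        calc s * frob V ≤ (ε / frob V) * frob V :=
              mul_le_mul_of_nonneg_right (min_le_left _ _) (frob_nonneg V)
          _ = ε := div_mul_cancel₀ ε hfV.ne'
      · rw [hWj j hne, sub_self, frob_zero]; exact hε.le
    have hge : 0 ≤ f (A + t • (V * P)) - f A := by
      have := hminε W hnear
      rw [hprod] at this
      linarith [this]
    -- gradient estimate
    have hfrH : frob (t • (V * P)) ≤ δ := by
      rw [frob_smul, habs_t]
      calc s * frob (V * P) ≤ (δ / frob (V * P)) * frob (V * P) :=
            mul_le_mul_of_nonneg_right (min_le_right _ _) (frob_nonneg _)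
        _ = δ := div_mul_cancel₀ δ hfVP.ne'
    have hest := hgrad (t • (V * P)) hfrH
    have htr : (Gᵀ * (t • (V * P))).trace = t * c := by
      rw [Matrix.mul_smul, Matrix.trace_smul, hcdef, smul_eq_mul]
    rw [htr, frob_smul, habs_t] at hest
    have hbound : |c| / (2 * frob (V * P)) * (s * frob (V * P)) = s * |c| / 2 := by
      field_simp
    rw [hbound] at hest
    have h1 : f (A + t • (V * P)) - f A ≤ t * c + s * |c| / 2 := by
      have := abs_le.mp hest
      linarith [this.2]
    rw [htc] at h1
    have : 0 < s * |c| := mul_pos hspos (abs_pos.mpr hc)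
    linarith
  -- Step 2: G * Pᵀ = 0
  have hGP : G * Pᵀ = 0 := by
    have h := key (G * Pᵀ)
    have htr : (Gᵀ * (G * Pᵀ * P)).trace = ((G * Pᵀ)ᵀ * (G * Pᵀ)).trace := by
      rw [Matrix.transpose_mul, Matrix.transpose_transpose]
      calc (Gᵀ * (G * Pᵀ * P)).trace
          = ((Gᵀ * (G * Pᵀ)) * P).trace := by rw [← Matrix.mul_assoc, ← Matrix.mul_assoc]
        _ = (P * (Gᵀ * (G * Pᵀ))).trace := Matrix.trace_mul_comm _ _
        _ = ((P * Gᵀ) * (G * Pᵀ)).trace := by rw [Matrix.mul_assoc]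
    rw [htr] at h
    apply eq_zero_of_sum_sq_eq_zero (A := G * Pᵀ)
    have : ((G * Pᵀ)ᵀ * (G * Pᵀ)).trace = ∑ i, ∑ j, ((G * Pᵀ) i j)^2 := by
      simp only [Matrix.trace, Matrix.diag, Matrix.mul_apply, Matrix.transpose_apply, sq]
      rw [Finset.sum_comm]
    rw [this] at h
    exact h
  -- Step 3: rows of G lie in the kernel of P
  ext i j
  have hrow : P.mulVecLin (fun k => G i k) = 0 := by
    ext l
    have := congrFun (congrFun hGP i) l
    simp only [Matrix.mul_apply, Matrix.transpose_apply, Matrix.zero_apply] at this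
    simp only [Matrix.mulVecLin_apply, Matrix.mulVec, dotProduct, Pi.zero_apply]
    rw [← this]
    exact Finset.sum_congr rfl fun k _ => mul_comm _ _
  have hk : LinearMap.ker (Matrix.mulVecLin P) = ⊥ := hker
  have hmem : (fun k => G i k) ∈ LinearMap.ker P.mulVecLin := hrow
  rw [hk] at hmem
  have h0 : (fun k => G i k) = 0 := (Submodule.mem_bot ℝ).mp hmem
  simpa using congrFun h0 j
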